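/- Let d ≥ 1, r > d - 1, and let (a_k), (b_k) be sequences indexed by ℤ^d \ {0} with |a_k| ≤ C/|k|^r and |b_k| ≤ C/|k|^r for all nonzero k. Then there is a constant c (depending only on r and d, not on k) such that for every nonzero k ∈ ℤ^d, the sum over decompositions k = l₁ + l₂ with l₁, l₂ ∈ ℤ^d \ {0} of |a_{l₁}| |b_{l₂}| |k|/|l₂| is at most c · (2^r |k| + 2^{r+1}(6|k|+1)^{d/2} + (1/2)|k|^{d-1-r}) · C²/|k|^r. -/

import Mathlib

noncomputable def znorm {d : ℕ} (l : Fin d → ℤ) : ℝ := Real.sqrt (∑ i, ((l i : ℝ))^2)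

namespace ConvAux

variable {d : ℕ}

lemma znorm_nonneg (l : Fin d → ℤ) : 0 ≤ znorm l := Real.sqrt_nonneg _

lemma abs_le_znorm (l : Fin d → ℤ) (i : Fin d) : |(l i : ℝ)| ≤ znorm l := by
  have h1 : ((l i : ℝ))^2 ≤ ∑ j, ((l j : ℝ))^2 :=
    Finset.single_le_sum (f := fun j => ((l j : ℝ))^2) (fun j _ => sq_nonneg _)
      (Finset.mem_univ i)
  have h2 := Real.sqrt_le_sqrt h1
  rwa [Real.sqrt_sq_eq_abs] at h2

lemma one_le_znorm {l : Fin d → ℤ} (hl : l ≠ 0) : 1 ≤ znorm l := by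
  obtain ⟨i, hi⟩ := Function.ne_iff.mp hl
  have h0 : l i ≠ 0 := by simpa using hi
  have h1 : (1:ℝ) ≤ |(l i : ℝ)| := by
    have := Int.one_le_abs h0
    rw [← Int.cast_abs]
    exact_mod_cast this
  exact h1.trans (abs_le_znorm l i)

lemma znorm_pos {l : Fin d → ℤ} (hl : l ≠ 0) : 0 < znorm l :=
  lt_of_lt_of_le one_pos (one_le_znorm hl)

noncomputable def toE (l : Fin d → ℤ) : EuclideanSpace ℝ (Fin d) := WithLp.toLp 2 (fun i => (l i : ℝ))

lemma znorm_eq (l : Fin d → ℤ) : znorm l = ‖toE l‖ := by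
  rw [EuclideanSpace.norm_eq, znorm]
  congr 1
  refine Finset.sum_congr rfl fun i _ => ?_
  rw [Real.norm_eq_abs, sq_abs]
  rfl

lemma toE_sub (x y : Fin d → ℤ) : toE (x - y) = toE x - toE y := by
  ext i
  show ((x i - y i : ℤ) : ℝ) = (x i : ℝ) - (y i : ℝ)
  push_cast; ring

lemma tri1 (k l : Fin d → ℤ) : znorm k ≤ znorm (k - l) + znorm l := by
  rw [znorm_eq, znorm_eq, znorm_eq, toE_sub]
  have h := norm_add_le (toE k - toE l) (toE l)
  simpa using h

lemma tri2 (k l : Fin d → ℤ) : znorm (k - l) ≤ znorm k + znorm l := by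
  rw [znorm_eq, znorm_eq, znorm_eq, toE_sub]
  exact norm_sub_le _ _


lemma summable_int_weight {t : ℝ} (ht : 1 < t) :
    Summable fun n : ℤ => (1 + |(n:ℝ)|) ^ (-t) := by
  have h1 : Summable (fun n : ℤ => |(n:ℝ)| ^ (-t)) := Real.summable_abs_int_rpow ht
  have h2 : Summable (fun n : ℤ => if n = 0 then (1:ℝ) - |(n:ℝ)| ^ (-t) else 0) := by
    apply summable_of_ne_finset_zero (s := ({0} : Finset ℤ))
    intro b hb
    simp only [Finset.mem_singleton] at hb
    simp [hb]
  have hg : Summable (fun n : ℤ => if n = 0 then (1:ℝ) else |(n:ℝ)| ^ (-t)) := by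
    refine (h1.add h2).congr fun n => ?_
    by_cases h : n = 0 <;> simp [h]
  refine Summable.of_nonneg_of_le (fun n => Real.rpow_nonneg (by positivity) _)
    (fun n => ?_) hg
  by_cases h : n = 0
  · simp [h]
  · rw [if_neg h]
    have habs : (0:ℝ) < |(n:ℝ)| := by
      simp only [abs_pos]
      exact_mod_cast h
    exact Real.rpow_le_rpow_of_nonpos habs (by linarith) (by linarith)

lemma summable_pi_weight {t : ℝ} (ht : 1 < t) :
    ∀ n : ℕ, Summable fun m : Fin n → ℤ => ∏ i, (1 + |(m i : ℝ)|) ^ (-t)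
  | 0 => (hasSum_fintype _).summable
  | (n+1) => by
      have hw := summable_int_weight ht
      have hprev := summable_pi_weight ht n
      have hmul := hw.mul_of_nonneg hprev
        (fun x => Real.rpow_nonneg (by positivity) _)
        (fun m => Finset.prod_nonneg fun i _ => Real.rpow_nonneg (by positivity) _)
      rw [← (Fin.consEquiv fun _ : Fin (n+1) => ℤ).summable_iff]
      refine hmul.congr fun p => ?_
      show (1 + |(p.1 : ℝ)|) ^ (-t) * ∏ i, (1 + |(p.2 i : ℝ)|) ^ (-t)
        = ∏ i, (1 + |(((Fin.consEquiv fun _ : Fin (n+1) => ℤ) p) i : ℝ)|) ^ (-t)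
      rw [Fin.prod_univ_succ]
      simp [Fin.consEquiv]

noncomputable def Fw {d : ℕ} (s : ℝ) (m : Fin d → ℤ) : ℝ :=
  if m = 0 then 0 else znorm m ^ (-s)

lemma Fw_zero {s : ℝ} : Fw (d := d) s 0 = 0 := by simp [Fw]

lemma Fw_of_ne {s : ℝ} {m : Fin d → ℤ} (h : m ≠ 0) : Fw s m = znorm m ^ (-s) := by
  simp [Fw, h]

lemma Fw_nonneg {s : ℝ} (m : Fin d → ℤ) : 0 ≤ Fw s m := by
  by_cases h : m = 0
  · simp [Fw, h]
  · rw [Fw_of_ne h]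
    exact Real.rpow_nonneg (znorm_nonneg _) _

lemma summable_F (hd : 1 ≤ d) {s : ℝ} (hs : (d:ℝ) < s) :
    Summable (Fw (d := d) s) := by
  unfold Fw
  have hd0 : (0:ℝ) < d := by exact_mod_cast hd
  have ht : 1 < s / d := (one_lt_div hd0).mpr hs
  have hW := summable_pi_weight ht d
  refine Summable.of_nonneg_of_le (fun m => ?_) (fun m => ?_) (hW.mul_left ((2:ℝ)^s))
  · by_cases h : m = 0
    · simp [h]
    · rw [if_neg h]; exact Real.rpow_nonneg (znorm_nonneg _) _
  · by_cases hm : m = 0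
    · rw [if_pos hm]
      have : (0:ℝ) ≤ ∏ i, (1 + |(m i : ℝ)|) ^ (-(s/d)) :=
        Finset.prod_nonneg fun i _ => Real.rpow_nonneg (by positivity) _
      positivity
    · rw [if_neg hm]
      have h1 : (0:ℝ) < znorm m := znorm_pos hm
      have hprodpos : (0:ℝ) < ∏ i, (1 + |(m i : ℝ)|) :=
        Finset.prod_pos fun i _ => by positivity
      have h2 : ∏ i, (1 + |(m i : ℝ)|) ≤ (2 * znorm m)^d := by
        calc ∏ i, (1 + |(m i : ℝ)|) ≤ ∏ _i : Fin d, (2 * znorm m) := by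
              refine Finset.prod_le_prod (fun i _ => by positivity) (fun i _ => ?_)
              have ha := abs_le_znorm m i
              have hb := one_le_znorm hm
              linarith
          _ = (2 * znorm m)^d := by
              rw [Finset.prod_const, Finset.card_univ, Fintype.card_fin]
      have h3 : ((2 * znorm m)^d : ℝ) ^ (-(s/d)) ≤ (∏ i, (1 + |(m i : ℝ)|)) ^ (-(s/d)) :=
        Real.rpow_le_rpow_of_nonpos hprodpos h2 (by rw [neg_nonpos]; positivity)
      have h4 : (∏ i, (1 + |(m i : ℝ)|)) ^ (-(s/d)) = ∏ i, (1 + |(m i : ℝ)|) ^ (-(s/d)) :=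
        (Real.finset_prod_rpow _ _ (fun i _ => by positivity) _).symm
      have hdne : (d:ℝ) ≠ 0 := ne_of_gt hd0
      have h5 : ((2 * znorm m)^d : ℝ) ^ (-(s/d)) = (2 * znorm m) ^ (-s) := by
        rw [← Real.rpow_natCast (2 * znorm m) d, ← Real.rpow_mul (by positivity)]
        congr 1
        field_simp
      have h6 : (2 * znorm m) ^ (-s) = 2 ^ (-s) * znorm m ^ (-s) :=
        Real.mul_rpow (by norm_num) h1.le
      have h7 : znorm m ^ (-s) = (2:ℝ)^s * ((2 * znorm m) ^ (-s)) := by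
        rw [h6, ← mul_assoc, ← Real.rpow_add two_pos]
        simp
      rw [h7]
      refine mul_le_mul_of_nonneg_left ?_ (Real.rpow_nonneg (by norm_num) _)
      rw [h5] at h3
      rw [← h4]
      exact h3


lemma half_rpow {K e : ℝ} (hK : 0 < K) : (K/2) ^ (-e) = 2 ^ e * K ^ (-e) := by
  rw [Real.div_rpow hK.le (by norm_num), Real.rpow_neg (by norm_num : (0:ℝ) ≤ 2),
    div_inv_eq_mul]
  ring

lemma region_bound {r K A M : ℝ} (hr : 0 < r) (hK : 0 < K) (hA : 1 ≤ A) (hM : 1 ≤ M)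
    (h1 : K ≤ A + M) (h2 : M ≤ K + A) :
    M ^ (-r) * A ^ (-(r+1)) ≤
      K ^ (-r) * ((2:ℝ) ^ r * A ^ (-(r+1)) + (2 + 2 ^ (r+2)) * M ^ (-(r+1))) := by
  have hA0 : (0:ℝ) < A := by linarith
  have hM0 : (0:ℝ) < M := by linarith
  have hAn : (0:ℝ) ≤ A ^ (-(r+1)) := Real.rpow_nonneg hA0.le _
  have hMn : (0:ℝ) ≤ M ^ (-(r+1)) := Real.rpow_nonneg hM0.le _
  have hKn : (0:ℝ) ≤ K ^ (-r) := Real.rpow_nonneg hK.le _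
  have h2r2 : (0:ℝ) ≤ (2:ℝ) ^ (r+2) := Real.rpow_nonneg (by norm_num) _
  rw [mul_add]
  rcases lt_or_ge A (K/2) with hc | hc
  · -- region A : M ≥ K/2
    have hMK : K/2 ≤ M := by linarith
    have e1 : M ^ (-r) ≤ (K/2) ^ (-r) :=
      Real.rpow_le_rpow_of_nonpos (by linarith) hMK (by linarith)
    have e2 : (K/2:ℝ) ^ (-r) = 2 ^ r * K ^ (-r) := half_rpow hK
    calc M ^ (-r) * A ^ (-(r+1)) ≤ (2 ^ r * K ^ (-r)) * A ^ (-(r+1)) := by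
          rw [← e2]; exact mul_le_mul_of_nonneg_right e1 hAn
      _ = K ^ (-r) * ((2:ℝ) ^ r * A ^ (-(r+1))) := by ring
      _ ≤ _ := le_add_of_nonneg_right (by
          have : (0:ℝ) ≤ (2 + 2 ^ (r+2)) * M ^ (-(r+1)) := by
            apply mul_nonneg (by linarith) hMn
          exact mul_nonneg hKn this)
  · rcases le_or_gt (2*K) M with hm | hm
    · -- region B
      have hAM : M/2 ≤ A := by linarith
      have e1 : A ^ (-(r+1)) ≤ (M/2) ^ (-(r+1)) :=
        Real.rpow_le_rpow_of_nonpos (by linarith) hAM (by linarith)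
      have e2 : (M/2:ℝ) ^ (-(r+1)) = 2 ^ (r+1) * M ^ (-(r+1)) := half_rpow hM0
      have e3 : M ^ (-r) ≤ (2*K) ^ (-r) :=
        Real.rpow_le_rpow_of_nonpos (by positivity) hm (by linarith)
      have e4 : ((2:ℝ)*K) ^ (-r) = 2 ^ (-r) * K ^ (-r) := Real.mul_rpow (by norm_num) hK.le
      have e5 : (2:ℝ) ^ (-r) * 2 ^ (r+1) = 2 := by
        rw [← Real.rpow_add two_pos]; norm_num
      calc M ^ (-r) * A ^ (-(r+1))
          ≤ ((2:ℝ) ^ (-r) * K ^ (-r)) * (2 ^ (r+1) * M ^ (-(r+1))) := by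
            rw [← e4]
            refine mul_le_mul e3 (by rw [← e2]; exact e1) hAn (by positivity)
        _ = ((2:ℝ) ^ (-r) * 2 ^ (r+1)) * (K ^ (-r) * M ^ (-(r+1))) := by ring
        _ = 2 * (K ^ (-r) * M ^ (-(r+1))) := by rw [e5]
        _ ≤ K ^ (-r) * ((2 + 2 ^ (r+2)) * M ^ (-(r+1))) := by nlinarith [mul_nonneg hKn hMn, mul_nonneg (mul_nonneg h2r2 hKn) hMn]
        _ ≤ _ := le_add_of_nonneg_left (by
            have : (0:ℝ) ≤ (2:ℝ) ^ r * A ^ (-(r+1)) :=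
              mul_nonneg (Real.rpow_nonneg (by norm_num) _) hAn
            exact mul_nonneg hKn this)
    · -- region C
      have e1 : A ^ (-(r+1)) ≤ (K/2) ^ (-(r+1)) :=
        Real.rpow_le_rpow_of_nonpos (by linarith) hc (by linarith)
      have e2 : (K/2:ℝ) ^ (-(r+1)) = 2 ^ (r+1) * K ^ (-(r+1)) := half_rpow hK
      have e5 : M ^ (-r) = M ^ (-(r+1)) * M := by
        rw [← Real.rpow_add_one (ne_of_gt hM0)]
        norm_num
      have e6 : K ^ (-(r+1)) * K = K ^ (-r) := by
        rw [← Real.rpow_add_one (ne_of_gt hK)]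
        norm_num
      have hKr1 : (0:ℝ) ≤ K ^ (-(r+1)) := Real.rpow_nonneg hK.le _
      calc M ^ (-r) * A ^ (-(r+1))
          = (M ^ (-(r+1)) * M) * A ^ (-(r+1)) := by rw [← e5]
        _ ≤ (M ^ (-(r+1)) * (2*K)) * (2 ^ (r+1) * K ^ (-(r+1))) := by
            refine mul_le_mul ?_ (by rw [← e2]; exact e1) hAn ?_
            · exact mul_le_mul_of_nonneg_left hm.le hMn
            · positivity
        _ = ((2:ℝ) ^ (r+1) * 2) * ((K ^ (-(r+1)) * K) * M ^ (-(r+1))) := by ring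
        _ = 2 ^ (r+2) * (K ^ (-r) * M ^ (-(r+1))) := by
            rw [e6]
            congr 1
            rw [Real.rpow_add two_pos r 1, Real.rpow_add two_pos r 2]
            norm_num
            ring
        _ ≤ K ^ (-r) * ((2 + 2 ^ (r+2)) * M ^ (-(r+1))) := by nlinarith [mul_nonneg hKn hMn]
        _ ≤ _ := le_add_of_nonneg_left (by
            have : (0:ℝ) ≤ (2:ℝ) ^ r * A ^ (-(r+1)) :=
              mul_nonneg (Real.rpow_nonneg (by norm_num) _) hAn
            exact mul_nonneg hKn this)

end ConvAux

theorem convolution_lemma (d : ℕ) (hd : 1 ≤ d) (r : ℝ) (hr : r > (d : ℝ) - 1) :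
    ∃ c : ℝ, ∀ (C : ℝ) (a b : (Fin d → ℤ) → ℝ),
      (∀ k : Fin d → ℤ, k ≠ 0 → |a k| ≤ C / znorm k ^ r) →
      (∀ k : Fin d → ℤ, k ≠ 0 → |b k| ≤ C / znorm k ^ r) →
      ∀ k : Fin d → ℤ, k ≠ 0 →
        ∑' l : {l : Fin d → ℤ // l ≠ 0 ∧ k - l ≠ 0},
            |a (k - l.1)| * |b l.1| * (znorm k / znorm l.1)
          ≤ c * ((2 : ℝ) ^ r * znorm k + (2 : ℝ) ^ (r + 1) * (6 * znorm k + 1) ^ ((d : ℝ) / 2)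
              + (1 / 2) * znorm k ^ ((d : ℝ) - 1 - r)) * (C ^ 2 / znorm k ^ r) := by
  have hd1 : (1:ℝ) ≤ (d:ℝ) := by exact_mod_cast hd
  have hr0 : 0 < r := by linarith
  have hs : (d:ℝ) < r + 1 := by linarith
  set F : (Fin d → ℤ) → ℝ := ConvAux.Fw (r+1) with hFdef
  have hFsum : Summable F := ConvAux.summable_F hd hs
  have hFnn : ∀ m, 0 ≤ F m := fun m => ConvAux.Fw_nonneg m
  set Z : ℝ := ∑' m, F m with hZdef
  have hZnn : 0 ≤ Z := tsum_nonneg hFnn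
  have hc2 : (0:ℝ) ≤ 2 + 2 ^ (r+2) := by
    have : (0:ℝ) ≤ (2:ℝ) ^ (r+2) := Real.rpow_nonneg (by norm_num) _
    linarith
  have h2rpos : (0:ℝ) < (2:ℝ) ^ r := Real.rpow_pos_of_pos two_pos r
  refine ⟨((2:ℝ) ^ r + (2 + 2 ^ (r+2))) * Z * 2 ^ (-r), ?_⟩
  intro C a b ha hb k hk
  set K := znorm k with hKdef
  have hKpos : 0 < K := ConvAux.znorm_pos hk
  have hK1 : 1 ≤ K := ConvAux.one_le_znorm hk
  have hKr : 0 < K ^ r := Real.rpow_pos_of_pos hKpos r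
  have hC : 0 ≤ C := by
    have h := (abs_nonneg (a k)).trans (ha k hk)
    by_contra hCneg
    push_neg at hCneg
    have : C / K ^ r < 0 := div_neg_of_neg_of_pos hCneg hKr
    linarith
  set g : {l : Fin d → ℤ // l ≠ 0 ∧ k - l ≠ 0} → ℝ := fun l =>
    C ^ 2 * K ^ ((1:ℝ) - r) * ((2:ℝ) ^ r * F l.1 + (2 + 2 ^ (r+2)) * F (k - l.1)) with hgdef
  have key : ∀ l : {l : Fin d → ℤ // l ≠ 0 ∧ k - l ≠ 0}, |a (k - l.1)| * |b l.1| * (K / znorm l.1) ≤ g l := by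
    rintro ⟨l, hl, hkl⟩
    set A := znorm l with hAdef
    set M := znorm (k - l) with hMdef
    have hA1 : 1 ≤ A := ConvAux.one_le_znorm hl
    have hM1 : 1 ≤ M := ConvAux.one_le_znorm hkl
    have hA0 : (0:ℝ) < A := by linarith
    have hM0 : (0:ℝ) < M := by linarith
    have hAr : 0 < A ^ r := Real.rpow_pos_of_pos hA0 r
    have hMr : 0 < M ^ r := Real.rpow_pos_of_pos hM0 r
    have step1 : |a (k - l)| * |b l| * (K / A) ≤ (C / M ^ r) * (C / A ^ r) * (K / A) := by
      refine mul_le_mul_of_nonneg_right ?_ (div_nonneg hKpos.le hA0.le)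
      exact mul_le_mul (ha _ hkl) (hb _ hl) (abs_nonneg _)
        (div_nonneg hC hMr.le)
    have step2 : (C / M ^ r) * (C / A ^ r) * (K / A)
        = C ^ 2 * K * (M ^ (-r) * A ^ (-(r+1))) := by
      rw [show (-(r+1)) = -r + -1 by ring, Real.rpow_add hA0, Real.rpow_neg hM0.le,
        Real.rpow_neg hA0.le, Real.rpow_neg_one]
      field_simp
    have step3 : M ^ (-r) * A ^ (-(r+1)) ≤
        K ^ (-r) * ((2:ℝ) ^ r * A ^ (-(r+1)) + (2 + 2 ^ (r+2)) * M ^ (-(r+1))) := by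
      refine ConvAux.region_bound hr0 hKpos hA1 hM1 ?_ ?_
      · have := ConvAux.tri1 k l
        rw [← hAdef, ← hMdef, ← hKdef] at this
        linarith
      · have := ConvAux.tri2 k l
        rw [← hAdef, ← hMdef, ← hKdef] at this
        linarith
    have step4 : C ^ 2 * K * (K ^ (-r) *
          ((2:ℝ) ^ r * A ^ (-(r+1)) + (2 + 2 ^ (r+2)) * M ^ (-(r+1)))) = g ⟨l, hl, hkl⟩ := by
      have hKK : K * K ^ (-r) = K ^ ((1:ℝ) - r) := by
        rw [show (1:ℝ) - r = 1 + -r by ring, Real.rpow_add hKpos, Real.rpow_one]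
      have hFl : F l = A ^ (-(r+1)) := ConvAux.Fw_of_ne hl
      have hFkl : F (k - l) = M ^ (-(r+1)) := ConvAux.Fw_of_ne hkl
      simp only [hgdef]
      rw [hFl, hFkl, ← hKK]
      ring
    calc |a (k - l)| * |b l| * (K / A)
        ≤ (C / M ^ r) * (C / A ^ r) * (K / A) := step1
      _ = C ^ 2 * K * (M ^ (-r) * A ^ (-(r+1))) := step2
      _ ≤ C ^ 2 * K * (K ^ (-r) *
            ((2:ℝ) ^ r * A ^ (-(r+1)) + (2 + 2 ^ (r+2)) * M ^ (-(r+1)))) := by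
          refine mul_le_mul_of_nonneg_left step3 ?_
          positivity
      _ = g ⟨l, hl, hkl⟩ := step4
  have hsub1 : Summable fun l : {l : Fin d → ℤ // l ≠ 0 ∧ k - l ≠ 0} => F l.1 :=
    hFsum.comp_injective Subtype.val_injective
  have hsub2 : Summable fun l : {l : Fin d → ℤ // l ≠ 0 ∧ k - l ≠ 0} => F (k - l.1) := by
    have h0 : Summable fun l : Fin d → ℤ => F (k - l) := by
      have h1 : Summable (F ∘ (Equiv.subLeft k)) := (Equiv.subLeft k).summable_iff.mpr hFsum
      exact h1.congr fun l => by rw [Function.comp_apply, Equiv.subLeft_apply]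
    exact h0.comp_injective Subtype.val_injective
  have hgsum : Summable g := by
    simp only [hgdef]
    exact (((hsub1.mul_left _).add (hsub2.mul_left _)).mul_left _)
  have hfnn : ∀ l : {l : Fin d → ℤ // l ≠ 0 ∧ k - l ≠ 0}, 0 ≤ |a (k - l.1)| * |b l.1| * (K / znorm l.1) := fun l =>
    mul_nonneg (mul_nonneg (abs_nonneg _) (abs_nonneg _))
      (div_nonneg hKpos.le (ConvAux.znorm_nonneg _))
  have hfsum : Summable fun l : {l : Fin d → ℤ // l ≠ 0 ∧ k - l ≠ 0} => |a (k - l.1)| * |b l.1| * (K / znorm l.1) :=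
    Summable.of_nonneg_of_le hfnn key hgsum
  have hts : ∑' l : {l : Fin d → ℤ // l ≠ 0 ∧ k - l ≠ 0}, |a (k - l.1)| * |b l.1| * (K / znorm l.1) ≤ ∑' l : {l : Fin d → ℤ // l ≠ 0 ∧ k - l ≠ 0}, g l :=
    hfsum.tsum_le_tsum key hgsum
  have hgt : ∑' l : {l : Fin d → ℤ // l ≠ 0 ∧ k - l ≠ 0}, g l = C ^ 2 * K ^ ((1:ℝ) - r) *
      ((2:ℝ) ^ r * (∑' l : {l : Fin d → ℤ // l ≠ 0 ∧ k - l ≠ 0}, F l.1) + (2 + 2 ^ (r+2)) * (∑' l : {l : Fin d → ℤ // l ≠ 0 ∧ k - l ≠ 0}, F (k - l.1))) := by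
    simp only [hgdef]
    rw [tsum_mul_left, (hsub1.mul_left _).tsum_add (hsub2.mul_left _),
      tsum_mul_left, tsum_mul_left]
  have hS1 : (∑' l : {l : Fin d → ℤ // l ≠ 0 ∧ k - l ≠ 0}, F l.1) ≤ Z :=
    hsub1.tsum_le_tsum_of_inj (fun l : {l : Fin d → ℤ // l ≠ 0 ∧ k - l ≠ 0} => l.1) Subtype.val_injective
      (fun c _ => hFnn c) (fun i => le_rfl) hFsum
  have hS2 : (∑' l : {l : Fin d → ℤ // l ≠ 0 ∧ k - l ≠ 0}, F (k - l.1)) ≤ Z := by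
    refine hsub2.tsum_le_tsum_of_inj (fun l : {l : Fin d → ℤ // l ≠ 0 ∧ k - l ≠ 0} => k - l.1) ?_
      (fun c _ => hFnn c) (fun i => le_rfl) hFsum
    intro x y hxy
    have h' : k - x.1 = k - y.1 := hxy
    rw [sub_right_inj] at h'
    exact Subtype.ext h'
  have hS1nn : 0 ≤ (∑' l : {l : Fin d → ℤ // l ≠ 0 ∧ k - l ≠ 0}, F l.1) := tsum_nonneg fun l => hFnn _
  have hS2nn : 0 ≤ (∑' l : {l : Fin d → ℤ // l ≠ 0 ∧ k - l ≠ 0}, F (k - l.1)) := tsum_nonneg fun l => hFnn _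
  have hmain : ∑' l : {l : Fin d → ℤ // l ≠ 0 ∧ k - l ≠ 0}, |a (k - l.1)| * |b l.1| * (K / znorm l.1)
      ≤ ((2:ℝ) ^ r + (2 + 2 ^ (r+2))) * Z * C ^ 2 * K ^ ((1:ℝ) - r) := by
    refine hts.trans ?_
    rw [hgt]
    have hb1 : (2:ℝ) ^ r * (∑' l : {l : Fin d → ℤ // l ≠ 0 ∧ k - l ≠ 0}, F l.1) + (2 + 2 ^ (r+2)) * (∑' l : {l : Fin d → ℤ // l ≠ 0 ∧ k - l ≠ 0}, F (k - l.1))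
        ≤ ((2:ℝ) ^ r + (2 + 2 ^ (r+2))) * Z := by
      have e1 : (2:ℝ) ^ r * (∑' l : {l : Fin d → ℤ // l ≠ 0 ∧ k - l ≠ 0}, F l.1) ≤ (2:ℝ) ^ r * Z :=
        mul_le_mul_of_nonneg_left hS1 h2rpos.le
      have e2 : (2 + 2 ^ (r+2)) * (∑' l : {l : Fin d → ℤ // l ≠ 0 ∧ k - l ≠ 0}, F (k - l.1)) ≤ (2 + 2 ^ (r+2)) * Z :=
        mul_le_mul_of_nonneg_left hS2 hc2
      linarith
    calc C ^ 2 * K ^ ((1:ℝ) - r) *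
          ((2:ℝ) ^ r * (∑' l : {l : Fin d → ℤ // l ≠ 0 ∧ k - l ≠ 0}, F l.1) + (2 + 2 ^ (r+2)) * (∑' l : {l : Fin d → ℤ // l ≠ 0 ∧ k - l ≠ 0}, F (k - l.1)))
        ≤ C ^ 2 * K ^ ((1:ℝ) - r) * (((2:ℝ) ^ r + (2 + 2 ^ (r+2))) * Z) := by
          refine mul_le_mul_of_nonneg_left hb1 ?_
          have := Real.rpow_nonneg hKpos.le ((1:ℝ) - r)
          positivity
      _ = ((2:ℝ) ^ r + (2 + 2 ^ (r+2))) * Z * C ^ 2 * K ^ ((1:ℝ) - r) := by ring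
  set c := ((2:ℝ) ^ r + (2 + 2 ^ (r+2))) * Z * 2 ^ (-r) with hcdef
  have hcnn : 0 ≤ c := by
    have h2rn : (0:ℝ) ≤ (2:ℝ) ^ (-r) := Real.rpow_nonneg (by norm_num) _
    have : (0:ℝ) ≤ (2:ℝ) ^ r + (2 + 2 ^ (r+2)) := by linarith
    positivity
  have hbr : (2:ℝ) ^ r * K ≤ (2:ℝ) ^ r * K + (2:ℝ) ^ (r+1) * (6 * K + 1) ^ ((d:ℝ)/2)
      + (1/2) * K ^ ((d:ℝ) - 1 - r) := by
    have e1 : (0:ℝ) ≤ (2:ℝ) ^ (r+1) * (6 * K + 1) ^ ((d:ℝ)/2) :=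
      mul_nonneg (Real.rpow_nonneg (by norm_num) _) (Real.rpow_nonneg (by linarith) _)
    have e2 : (0:ℝ) ≤ (1/2) * K ^ ((d:ℝ) - 1 - r) :=
      mul_nonneg (by norm_num) (Real.rpow_nonneg hKpos.le _)
    linarith
  have heq : c * ((2:ℝ) ^ r * K) * (C ^ 2 / K ^ r)
      = ((2:ℝ) ^ r + (2 + 2 ^ (r+2))) * Z * C ^ 2 * K ^ ((1:ℝ) - r) := by
    have h2r1 : (2:ℝ) ^ (-r) * 2 ^ r = 1 := by
      rw [← Real.rpow_add two_pos]; norm_num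
    have hKr1 : K ^ ((1:ℝ) - r) = K / K ^ r := by
      rw [show (1:ℝ) - r = 1 + -r by ring, Real.rpow_add hKpos, Real.rpow_one,
        Real.rpow_neg hKpos.le, div_eq_mul_inv]
    rw [hcdef, hKr1, show (r+2 : ℝ) = 2+r from by ring]
    field_simp
    linear_combination (Z * C^2) * h2r1
  calc ∑' l : {l : Fin d → ℤ // l ≠ 0 ∧ k - l ≠ 0}, |a (k - l.1)| * |b l.1| * (K / znorm l.1)
      ≤ ((2:ℝ) ^ r + (2 + 2 ^ (r+2))) * Z * C ^ 2 * K ^ ((1:ℝ) - r) := hmain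
    _ = c * ((2:ℝ) ^ r * K) * (C ^ 2 / K ^ r) := heq.symm
    _ ≤ c * ((2:ℝ) ^ r * K + (2:ℝ) ^ (r+1) * (6 * K + 1) ^ ((d:ℝ)/2)
          + (1/2) * K ^ ((d:ℝ) - 1 - r)) * (C ^ 2 / K ^ r) := by
        refine mul_le_mul_of_nonneg_right ?_ (div_nonneg (sq_nonneg C) hKr.le)
        exact mul_le_mul_of_nonneg_left hbr hcnn
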